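/- If ν is a multiplicative arithmetic function, then supp(ν) has positive asymptotic density if and only if ∑_{p prime, ν(p)=0} 1/p < ∞. -/

import Mathlib

open Filter Topology ArithmeticFunction

/-- Number of elements of `A` in `[1, N]`. -/
noncomputable def cnt (A : Set ℕ) (N : ℕ) : ℕ := (A ∩ Set.Icc 1 N).ncard

/-- `A ⊆ ℕ` has asymptotic density `d`. -/
def HasDensity (A : Set ℕ) (d : ℝ) : Prop :=
  Filter.Tendsto (fun N : ℕ => (cnt A N : ℝ) / N) Filter.atTop (nhds d)

/-- `A` is thin: the sum of the reciprocals of its elements converges. -/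
def Thin (A : Set ℕ) : Prop := Summable (fun a : A => (1 : ℝ) / a)

namespace SieveAux
open Finset
open scoped Classical

lemma telescope (g : ℕ → ℝ) (c K : ℕ) (h : c ≤ K + 1) :
    ∑ k ∈ Finset.Icc c K, (g k - g (k+1)) = g c - g (K+1) := by
  rw [← Finset.Ico_add_one_right_eq_Icc, Finset.sum_Ico_eq_sum_range]
  have : ∀ i, g (c + i) - g (c + i + 1) = (fun j => g (c + j)) i - (fun j => g (c + j)) (i+1) := by
    intro i; simp [Nat.add_assoc]
  simp_rw [this]
  rw [Finset.sum_range_sub' (fun j => g (c + j)) (K + 1 - c)]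
  congr 2
  omega

lemma count_dvd_Icc (N d : ℕ) : ((Finset.Icc 1 N).filter (fun n => d ∣ n)).card = N / d := by
  rw [show Finset.Icc 1 N = Finset.Ioc 0 N from rfl]
  exact Nat.Ioc_filter_dvd_card_eq_div N d

lemma count_dvd_range (M d : ℕ) (hd : 0 < d) (h : d ∣ M) :
    ((Finset.range M).filter (fun n => d ∣ n)).card = M / d := by
  rw [← Finset.card_range (M / d)]
  apply Finset.card_bij' (fun n _ => n / d) (fun i _ => d * i)
  · intro n hn
    simp only [mem_filter, mem_range] at hn
    rw [mem_range]
    obtain ⟨hn1, c, rfl⟩ := hn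
    rw [Nat.mul_div_cancel_left _ hd]
    obtain ⟨e, rfl⟩ := h
    rw [Nat.mul_div_cancel_left _ hd]
    exact lt_of_mul_lt_mul_left hn1 (le_of_lt hd)
  · intro i hi
    simp only [mem_range] at hi
    simp only [mem_filter, mem_range]
    refine ⟨?_, Dvd.intro i rfl⟩
    calc d * i < d * (M / d) := (Nat.mul_lt_mul_left hd).mpr hi
    _ ≤ M := Nat.mul_div_le M d
  · intro n hn
    simp only [mem_filter] at hn
    exact Nat.mul_div_cancel' hn.2
  · intro i _
    exact Nat.mul_div_cancel_left _ hd

lemma count_exact_dvd (M p k : ℕ) (hp : 1 < p) (h1 : p^(k+1) ∣ M) :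
    ((Finset.range M).filter (fun n => p^k ∣ n ∧ ¬ p^(k+1) ∣ n)).card
      = M / p^k - M / p^(k+1) := by
  have hdk : p ^ k ∣ M := (pow_dvd_pow p (Nat.le_succ k)).trans h1
  have hsplit := Finset.card_filter_add_card_filter_not
    (s := (Finset.range M).filter (fun n => p^k ∣ n)) (p := fun n => p^(k+1) ∣ n)
  rw [Finset.filter_filter, Finset.filter_filter] at hsplit
  have e1 : (Finset.range M).filter (fun n => p^k ∣ n ∧ p^(k+1) ∣ n)
      = (Finset.range M).filter (fun n => p^(k+1) ∣ n) := by
    apply Finset.filter_congr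
    intro n _
    constructor
    · exact fun h => h.2
    · exact fun h => ⟨(pow_dvd_pow p (Nat.le_succ k)).trans h, h⟩
  rw [e1] at hsplit
  rw [count_dvd_range M (p^k) (pow_pos (by omega) k) hdk,
    count_dvd_range M (p^(k+1)) (pow_pos (by omega) (k+1)) h1] at hsplit
  have hle : M / p^(k+1) ≤ M / p^k :=
    Nat.div_le_div_left (Nat.pow_le_pow_right (by omega) (Nat.le_succ k)) (pow_pos (by omega) k)
  omega



variable (ν : ArithmeticFunction ℂ)

/-- the sieve condition at prime `p` with exponents up to `K` -/
def GoodP (p K n : ℕ) : Prop :=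
  ∀ k, 1 ≤ k → k ≤ K → p ^ k ∣ n → ¬ p ^ (k+1) ∣ n → ν (p ^ k) ≠ 0

/-- per-prime weight -/
noncomputable def W (q : ℕ) : ℝ :=
  if q.Prime then (if ν q = 0 then 1/(q:ℝ) else 1/(q:ℝ)^2) else 0

lemma W_nonneg (q : ℕ) : 0 ≤ W ν q := by
  unfold W
  split
  · split <;> positivity
  · exact le_rfl

lemma W_le_half (q : ℕ) (hq : q.Prime) : W ν q ≤ 1/2 := by
  have h2 : (2:ℝ) ≤ q := by exact_mod_cast hq.two_le
  unfold W
  rw [if_pos hq]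
  split
  · rw [div_le_div_iff₀ (by linarith) (by norm_num)]; linarith
  · have : (2:ℝ) ≤ (q:ℝ)^2 := by nlinarith
    rw [div_le_div_iff₀ (by nlinarith) (by norm_num)]; linarith

lemma goodP_mod (p K : ℕ) (hp : 0 < p) (n : ℕ) :
    GoodP ν p K n ↔ GoodP ν p K (n % p^(K+1)) := by
  unfold GoodP
  apply forall_congr'
  intro k
  constructor
  · intro H h1 h2 hd hnd
    exact H h1 h2 ((Nat.dvd_mod_iff (pow_dvd_pow p (by omega))).mp hd)
      (fun hc => hnd ((Nat.dvd_mod_iff (pow_dvd_pow p (by omega))).mpr hc))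
  · intro H h1 h2 hd hnd
    exact H h1 h2 ((Nat.dvd_mod_iff (pow_dvd_pow p (by omega))).mpr hd)
      (fun hc => hnd ((Nat.dvd_mod_iff (pow_dvd_pow p (by omega))).mp hc))

lemma good_count_lb (p K : ℕ) (hp : p.Prime) (hK : 1 ≤ K) :
    ((p:ℝ) ^ (K+1)) * (1 - W ν p)
      ≤ (((Finset.range (p^(K+1))).filter (GoodP ν p K)).card : ℝ) := by
  set M := p ^ (K+1) with hM
  have hp1 : 1 < p := hp.one_lt
  have hMpos : 0 < M := pow_pos hp.pos _
  -- the bad set is covered by the exact-divisibility sets over bad exponents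
  set Ks := (Finset.Icc 1 K).filter (fun k => ν (p^k) = 0) with hKs
  set E := fun k => (Finset.range M).filter (fun n => p^k ∣ n ∧ ¬ p^(k+1) ∣ n) with hE
  have hcover : (Finset.range M).filter (fun n => ¬ GoodP ν p K n) ⊆ Ks.biUnion E := by
    intro n hn
    simp only [mem_filter, mem_range] at hn
    obtain ⟨hnM, hbad⟩ := hn
    unfold GoodP at hbad
    push_neg at hbad
    obtain ⟨k, h1, h2, hd, hnd, hz⟩ := hbad
    rw [Finset.mem_biUnion]
    exact ⟨k, by simp [hKs, Finset.mem_filter, Finset.mem_Icc, h1, h2, hz],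
      by simp [hE, Finset.mem_filter, Finset.mem_range, hnM, hd, hnd]⟩
  -- count each exact-divisibility set
  have hcardE : ∀ k ∈ Ks, ((E k).card : ℝ) = (M:ℝ)/(p:ℝ)^k - (M:ℝ)/(p:ℝ)^(k+1) := by
    intro k hk
    simp only [hKs, Finset.mem_filter, Finset.mem_Icc] at hk
    have hk1 : k + 1 ≤ K + 1 := by omega
    have hdvd : p^(k+1) ∣ M := pow_dvd_pow p hk1
    have hdvd' : p^k ∣ M := pow_dvd_pow p (by omega)
    rw [hE]
    simp only
    rw [count_exact_dvd M p k hp1 hdvd]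
    have hle : M / p^(k+1) ≤ M / p^k :=
      Nat.div_le_div_left (Nat.pow_le_pow_right (by omega) (Nat.le_succ k)) (pow_pos (by omega) k)
    rw [Nat.cast_sub hle, Nat.cast_div hdvd' (by positivity), Nat.cast_div hdvd (by positivity),
      Nat.cast_pow, Nat.cast_pow]
    push_cast
    ring
  -- sum bound via telescoping
  set c : ℕ := if ν p = 0 then 1 else 2 with hc
  have hKsub : Ks ⊆ Finset.Icc c K := by
    intro k hk
    simp only [hKs, Finset.mem_filter, Finset.mem_Icc] at hk
    simp only [Finset.mem_Icc]
    refine ⟨?_, hk.1.2⟩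
    rw [hc]
    split
    · omega
    · rcases Nat.lt_or_ge k 2 with h | h
      · interval_cases k
        · omega
        · exfalso; rw [pow_one] at hk; tauto
      · exact h
  have hterm_nonneg : ∀ k : ℕ, (0:ℝ) ≤ (M:ℝ)/(p:ℝ)^k - (M:ℝ)/(p:ℝ)^(k+1) := by
    intro k
    have h3 : (M:ℝ)/(p:ℝ)^(k+1) ≤ (M:ℝ)/(p:ℝ)^k := by
      gcongr
      · exact_mod_cast hp.one_lt.le
      · exact Nat.le_succ k
    linarith
  have hbad : (((Finset.range M).filter (fun n => ¬ GoodP ν p K n)).card : ℝ)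
      ≤ (M:ℝ) * W ν p := by
    have h1 : ((Finset.range M).filter (fun n => ¬ GoodP ν p K n)).card
        ≤ ∑ k ∈ Ks, (E k).card :=
      le_trans (Finset.card_le_card hcover) Finset.card_biUnion_le
    have h2 : (((Finset.range M).filter (fun n => ¬ GoodP ν p K n)).card : ℝ)
        ≤ ∑ k ∈ Ks, ((E k).card : ℝ) := by exact_mod_cast h1
    rw [Finset.sum_congr rfl hcardE] at h2
    have h3 : ∑ k ∈ Ks, ((M:ℝ)/(p:ℝ)^k - (M:ℝ)/(p:ℝ)^(k+1))
        ≤ ∑ k ∈ Finset.Icc c K, ((M:ℝ)/(p:ℝ)^k - (M:ℝ)/(p:ℝ)^(k+1)) :=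
      Finset.sum_le_sum_of_subset_of_nonneg hKsub (fun k _ _ => hterm_nonneg k)
    have h4 : ∑ k ∈ Finset.Icc c K, ((M:ℝ)/(p:ℝ)^k - (M:ℝ)/(p:ℝ)^(k+1))
        = (M:ℝ)/(p:ℝ)^c - (M:ℝ)/(p:ℝ)^(K+1) :=
      telescope (fun k => (M:ℝ)/(p:ℝ)^k) c K (by rw [hc]; split <;> omega)
    have h5 : (M:ℝ)/(p:ℝ)^c ≤ (M:ℝ) * W ν p := by
      unfold W
      rw [if_pos hp, hc]
      by_cases h : ν p = 0
      · rw [if_pos h, if_pos h, pow_one]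
        exact le_of_eq (by ring)
      · rw [if_neg h, if_neg h]
        exact le_of_eq (by ring)
    have h6 : (0:ℝ) ≤ (M:ℝ)/(p:ℝ)^(K+1) := by positivity
    linarith
  have hsplit := Finset.card_filter_add_card_filter_not
    (s := Finset.range M) (p := GoodP ν p K)
  rw [Finset.card_range] at hsplit
  have hcast := congrArg (fun x : ℕ => (x : ℝ)) hsplit
  push_cast at hcast
  have hMcast : (M:ℝ) = (p:ℝ)^(K+1) := by rw [hM]; push_cast; ring
  nlinarith [W_nonneg ν p, hMcast ▸ hbad]


lemma count_block (M : ℕ) (P : ℕ → Prop) [DecidablePred P]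
    (hP : ∀ a, P a ↔ P (a % M)) (q : ℕ) :
    ((Finset.range (M * q)).filter P).card = q * ((Finset.range M).filter P).card := by
  induction q with
  | zero => simp
  | succ q ih =>
    have hsplit : M * (q+1) = M*q + M := by ring
    have hdisj : Disjoint ((Finset.range (M*q)).filter P)
        (((Finset.range M).map (addLeftEmbedding (M*q))).filter P) := by
      rw [Finset.disjoint_left]
      intro a ha hb
      simp only [mem_filter, mem_range, Finset.mem_map, addLeftEmbedding_apply] at ha hb
      obtain ⟨⟨b, _, rfl⟩, _⟩ := hb
      omega
    rw [hsplit, Finset.range_add, Finset.filter_union, Finset.card_union_of_disjoint hdisj, ih,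
      Finset.filter_map, Finset.card_map]
    have hcongr : (Finset.range M).filter ((fun a => P a) ∘ (addLeftEmbedding (M*q))) =
        (Finset.range M).filter (fun a => P a) := by
      apply Finset.filter_congr
      intro a _
      simp only [Function.comp, addLeftEmbedding_apply]
      rw [hP (M*q + a), hP a, show M*q + a = a + M*q from by ring, Nat.add_mul_mod_self_left]
    rw [hcongr]
    ring

lemma periodic_count_bounds (M : ℕ) (hM : 0 < M) (P : ℕ → Prop) [DecidablePred P]
    (hP : ∀ a, P a ↔ P (a % M)) (N : ℕ) :
    (N:ℝ) * ((Finset.range M).filter P).card / M - (M+1) ≤ (((Finset.Icc 1 N).filter P).card : ℝ)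
    ∧ (((Finset.Icc 1 N).filter P).card : ℝ)
      ≤ (N:ℝ) * ((Finset.range M).filter P).card / M + M := by
  set q := N / M with hq
  set R := ((Finset.range M).filter P).card with hR
  set C := ((Finset.Icc 1 N).filter P).card with hC
  have hqN : M * q ≤ N := Nat.mul_div_le N M
  have hNq : N < M * (q + 1) := by
    have hd : M * q + N % M = N := by rw [hq]; exact Nat.div_add_mod N M
    have := Nat.mod_lt N hM
    rw [Nat.mul_succ]
    omega
  have hRM : R ≤ M := le_trans (Finset.card_filter_le _ _) (by simp)
  have hupper : C ≤ (q + 1) * R := by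
    rw [← count_block M P hP (q+1)]
    apply Finset.card_le_card
    intro a ha
    simp only [mem_filter, mem_Icc, mem_range] at ha ⊢
    exact ⟨by omega, ha.2⟩
  have hlower : q * R ≤ C + 1 := by
    rw [← count_block M P hP q]
    calc ((Finset.range (M*q)).filter P).card
        ≤ (insert 0 ((Finset.Icc 1 N).filter P)).card := by
          apply Finset.card_le_card
          intro a ha
          simp only [mem_filter, mem_range] at ha
          rcases Nat.eq_zero_or_pos a with h0 | h0
          · simp [h0]
          · apply Finset.mem_insert_of_mem
            simp only [mem_filter, mem_Icc]
            exact ⟨⟨h0, by omega⟩, ha.2⟩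
    _ ≤ C + 1 := Finset.card_insert_le _ _
  -- now real estimates
  have hMR : (0:ℝ) < M := by exact_mod_cast hM
  have h1 : (M:ℝ) * q ≤ N := by exact_mod_cast hqN
  have h2 : (N:ℝ) < M * (q + 1) := by exact_mod_cast hNq
  have h3 : (R:ℝ) ≤ M := by exact_mod_cast hRM
  have h4 : (C:ℝ) ≤ (q+1) * R := by exact_mod_cast hupper
  have h5 : (q:ℝ) * R ≤ C + 1 := by exact_mod_cast hlower
  have h6 : (0:ℝ) ≤ R := Nat.cast_nonneg _
  have h7 : (0:ℝ) ≤ q := by positivity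
  have key1 : (C:ℝ) * M ≤ N * R + M * M := by nlinarith
  have key2 : (N:ℝ) * R ≤ (C + M + 1) * M := by nlinarith
  constructor
  · rw [sub_le_iff_le_add, div_le_iff₀ hMR]
    nlinarith
  · rw [← sub_le_iff_le_add, le_div_iff₀ hMR]
    nlinarith


lemma crt_count (m n : ℕ) (hm : 0 < m) (hn : 0 < n) (h : Nat.Coprime m n)
    (P Q : ℕ → Prop) [DecidablePred P] [DecidablePred Q]
    (hP : ∀ a, P a ↔ P (a % m)) (hQ : ∀ a, Q a ↔ Q (a % n)) :
    ((Finset.range (m*n)).filter (fun a => P a ∧ Q a)).card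
      = ((Finset.range m).filter P).card * ((Finset.range n).filter Q).card := by
  rw [← Finset.card_product]
  apply Finset.card_bij' (fun a _ => (a % m, a % n))
    (fun b _ => (Nat.chineseRemainder h b.1 b.2 : ℕ) % (m * n))
  · intro a ha
    simp only [mem_filter, mem_range, Finset.mem_product] at ha ⊢
    exact ⟨⟨Nat.mod_lt a hm, (hP a).mp ha.2.1⟩, ⟨Nat.mod_lt a hn, (hQ a).mp ha.2.2⟩⟩
  · intro b hb
    simp only [Finset.mem_product, mem_filter, mem_range] at hb ⊢
    obtain ⟨⟨hb1, hb1P⟩, ⟨hb2, hb2Q⟩⟩ := hb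
    set k := (Nat.chineseRemainder h b.1 b.2 : ℕ) with hk
    have hk1 : k ≡ b.1 [MOD m] := (Nat.chineseRemainder h b.1 b.2).2.1
    have hk2 : k ≡ b.2 [MOD n] := (Nat.chineseRemainder h b.1 b.2).2.2
    have e1 : k % (m*n) % m = b.1 := by
      rw [Nat.mod_mod_of_dvd _ ⟨n, rfl⟩]
      have := hk1; unfold Nat.ModEq at this
      rw [this, Nat.mod_eq_of_lt hb1]
    have e2 : k % (m*n) % n = b.2 := by
      rw [Nat.mod_mod_of_dvd _ ⟨m, mul_comm m n⟩]
      have := hk2; unfold Nat.ModEq at this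
      rw [this, Nat.mod_eq_of_lt hb2]
    refine ⟨Nat.mod_lt _ (by positivity), ?_, ?_⟩
    · rw [hP _, e1]; exact hb1P
    · rw [hQ _, e2]; exact hb2Q
  · intro a ha
    simp only [mem_filter, mem_range] at ha
    set k := (Nat.chineseRemainder h (a % m) (a % n) : ℕ) with hk
    have hk1 : k ≡ a % m [MOD m] := (Nat.chineseRemainder h _ _).2.1
    have hk2 : k ≡ a % n [MOD n] := (Nat.chineseRemainder h _ _).2.2
    have h1 : k ≡ a [MOD m] := hk1.trans (Nat.mod_modEq a m)
    have h2 : k ≡ a [MOD n] := hk2.trans (Nat.mod_modEq a n)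
    have : k ≡ a [MOD m * n] := (Nat.modEq_and_modEq_iff_modEq_mul h).mp ⟨h1, h2⟩
    have := this.symm
    unfold Nat.ModEq at this
    rw [← this, Nat.mod_eq_of_lt ha.1]
  · intro b hb
    simp only [Finset.mem_product, mem_filter, mem_range] at hb
    obtain ⟨⟨hb1, _⟩, ⟨hb2, _⟩⟩ := hb
    set k := (Nat.chineseRemainder h b.1 b.2 : ℕ) with hk
    have hk1 : k ≡ b.1 [MOD m] := (Nat.chineseRemainder h b.1 b.2).2.1
    have hk2 : k ≡ b.2 [MOD n] := (Nat.chineseRemainder h b.1 b.2).2.2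
    have e1 : k % (m*n) % m = b.1 := by
      rw [Nat.mod_mod_of_dvd _ ⟨n, rfl⟩]
      have := hk1; unfold Nat.ModEq at this
      rw [this, Nat.mod_eq_of_lt hb1]
    have e2 : k % (m*n) % n = b.2 := by
      rw [Nat.mod_mod_of_dvd _ ⟨m, mul_comm m n⟩]
      have := hk2; unfold Nat.ModEq at this
      rw [this, Nat.mod_eq_of_lt hb2]
    rw [Prod.ext_iff]
    exact ⟨e1, e2⟩

lemma crt_count_finset (F : Finset ℕ) (hF : ∀ p ∈ F, Nat.Prime p) (e : ℕ)
    (P : ℕ → ℕ → Prop) [∀ p, DecidablePred (P p)]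
    (hP : ∀ p ∈ F, ∀ a, P p a ↔ P p (a % p ^ e)) :
    ((Finset.range (∏ p ∈ F, p ^ e)).filter (fun a => ∀ p ∈ F, P p a)).card
      = ∏ p ∈ F, ((Finset.range (p ^ e)).filter (P p)).card := by
  induction F using Finset.induction_on with
  | empty => simp
  | @insert q F hq ih =>
    have hqp : Nat.Prime q := hF q (mem_insert_self q F)
    have hFp : ∀ p ∈ F, Nat.Prime p := fun p hp => hF p (mem_insert_of_mem hp)
    have hprod_pos : 0 < ∏ p ∈ F, p ^ e := by
      apply Finset.prod_pos
      intro p hp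
      exact pow_pos (hFp p hp).pos e
    have hco : Nat.Coprime (q ^ e) (∏ p ∈ F, p ^ e) := by
      apply Nat.Coprime.pow_left
      apply Nat.Coprime.prod_right
      intro p hp
      apply Nat.Coprime.pow_right
      exact (Nat.coprime_primes hqp (hFp p hp)).mpr (fun hqe => hq (hqe ▸ hp))
    have hdep : ∀ a, (∀ p ∈ F, P p a) ↔ (∀ p ∈ F, P p (a % ∏ p ∈ F, p ^ e)) := by
      intro a
      apply forall₂_congr
      intro p hp
      rw [hP p (mem_insert_of_mem hp) a, hP p (mem_insert_of_mem hp) (a % ∏ p ∈ F, p ^ e),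
        Nat.mod_mod_of_dvd _ (Finset.dvd_prod_of_mem (fun p => p ^ e) hp)]
    rw [Finset.prod_insert hq, Finset.prod_insert hq, ← ih hFp (fun p hp => hP p (mem_insert_of_mem hp))]
    have := crt_count (q ^ e) (∏ p ∈ F, p ^ e) (pow_pos hqp.pos e) hprod_pos hco
      (P q) (fun a => ∀ p ∈ F, P p a) (hP q (mem_insert_self q F)) hdep
    rw [← this]
    congr 1
    apply Finset.filter_congr
    intro a _
    simp [Finset.forall_mem_insert]


lemma nu_pow_ne (hν : ν.IsMultiplicative) {n : ℕ} (hn : n ≠ 0) (h : ν n ≠ 0)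
    {p k : ℕ} (hp : p.Prime) (hd : p ^ k ∣ n) (hnd : ¬ p ^ (k+1) ∣ n) : ν (p ^ k) ≠ 0 := by
  have hk : n.factorization p = k := by
    have h1 : k ≤ n.factorization p := (hp.pow_dvd_iff_le_factorization hn).mp hd
    have h2 : ¬ (k + 1 ≤ n.factorization p) :=
      fun hc => hnd ((hp.pow_dvd_iff_le_factorization hn).mpr hc)
    omega
  rcases Nat.eq_zero_or_pos k with rfl | hkpos
  · rw [pow_zero, hν.map_one]
    exact one_ne_zero
  · have hmem : p ∈ n.factorization.support := by
      rw [Nat.support_factorization, Nat.mem_primeFactors]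
      exact ⟨hp, dvd_trans (dvd_pow_self p (by omega : k ≠ 0)) hd, hn⟩
    have hfact := ArithmeticFunction.IsMultiplicative.multiplicative_factorization ν hν hn
    rw [hfact, Finsupp.prod] at h
    have := Finset.prod_ne_zero_iff.mp h p hmem
    rw [hk] at this
    exact this

lemma nu_zero_exists (hν : ν.IsMultiplicative) {n : ℕ} (hn : n ≠ 0) (h : ν n = 0) :
    ∃ p ∈ n.primeFactors, ν (p ^ n.factorization p) = 0 := by
  have hfact := ArithmeticFunction.IsMultiplicative.multiplicative_factorization ν hν hn
  rw [hfact, Finsupp.prod] at h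
  obtain ⟨p, hp, hz⟩ := Finset.prod_eq_zero_iff.mp h
  exact ⟨p, Nat.support_factorization n ▸ hp, hz⟩

lemma sum_tail_le (f : ℕ → ℝ) (hf0 : ∀ n, 0 ≤ f n) (hf : Summable f) (s : Finset ℕ) (x : ℕ)
    (hs : ∀ q ∈ s, x < q) : ∑ q ∈ s, f q ≤ ∑' i, f (i + (x+1)) := by
  have hg : Summable (fun i => f (i + (x+1))) := (summable_nat_add_iff (x+1)).mpr hf
  have himg : ∑ i ∈ s.image (fun q => q - (x+1)), f (i + (x+1)) = ∑ q ∈ s, f q := by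
    rw [Finset.sum_image]
    · apply Finset.sum_congr rfl
      intro q hq
      congr 1
      have := hs q hq
      omega
    · intro q1 h1 q2 h2 he
      have := hs q1 h1
      have := hs q2 h2
      dsimp only at he
      omega
  rw [← himg]
  exact Summable.sum_le_tsum _ (fun i _ => hf0 _) hg

lemma W_summable (hsum : Summable (fun p : {p : ℕ // p.Prime ∧ ν p = 0} => (1 : ℝ) / (p : ℕ))) :
    Summable (W ν) := by
  have h1 : Summable (Set.indicator {q : ℕ | q.Prime ∧ ν q = 0} (fun q => 1/(q:ℝ))) :=
    summable_subtype_iff_indicator.mp hsum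
  have h3 : Summable (fun q : ℕ => 1/(q:ℝ)^2) := by
    have := Real.summable_one_div_nat_pow (p := 2)
    exact this.mpr one_lt_two
  have h2 : Summable (fun q : ℕ => if q.Prime then 1/(q:ℝ)^2 else 0) := by
    apply Summable.of_nonneg_of_le _ _ h3
    · intro q; split <;> positivity
    · intro q; split
      · exact le_rfl
      · positivity
  apply Summable.of_nonneg_of_le (W_nonneg ν) _ (h1.add h2)
  intro q
  unfold W
  by_cases hq : q.Prime
  · rw [if_pos hq]
    by_cases hz : ν q = 0
    · rw [if_pos hz, Set.indicator_of_mem (by exact ⟨hq, hz⟩), if_pos hq]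
      have : (0:ℝ) ≤ 1/(q:ℝ)^2 := by positivity
      show _ ≤ _ + _
      linarith
    · rw [if_neg hz, Set.indicator_of_notMem (by simp [hz]), if_pos hq]
      show _ ≤ _ + _
      norm_num
  · rw [if_neg hq, if_neg hq]
    show (0:ℝ) ≤ _ + _
    have : (0:ℝ) ≤ Set.indicator {q : ℕ | q.Prime ∧ ν q = 0} (fun q => 1/(q:ℝ)) q :=
      Set.indicator_nonneg (fun a _ => by positivity) q
    linarith

lemma one_sub_ge_exp {a : ℝ} (h0 : 0 ≤ a) (h : a ≤ 1/2) : Real.exp (-(2*a)) ≤ 1 - a := by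
  have h1 : 2*a + 1 ≤ Real.exp (2*a) := Real.add_one_le_exp (2*a)
  have h2 : 0 < Real.exp (2*a) := Real.exp_pos _
  rw [Real.exp_neg]
  rw [inv_le_iff_one_le_mul₀ h2]
  nlinarith

lemma one_sub_le_exp (a : ℝ) : 1 - a ≤ Real.exp (-a) := by
  have := Real.add_one_le_exp (-a)
  linarith

lemma cnt_eq (A : Set ℕ) (N : ℕ) :
    cnt A N = ((Finset.Icc 1 N).filter (fun n => n ∈ A)).card := by
  rw [← Set.ncard_coe_finset]
  unfold cnt
  congr 1
  ext n
  simp only [Set.mem_inter_iff, Set.mem_Icc, Finset.coe_filter, Finset.mem_Icc, Set.mem_setOf_eq]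
  tauto

lemma forward (hν : ν.IsMultiplicative) (d : ℝ) (hd0 : 0 < d)
    (hdens : HasDensity {n : ℕ | ν n ≠ 0} d) :
    Summable (fun p : {p : ℕ // p.Prime ∧ ν p = 0} => (1 : ℝ) / (p : ℕ)) := by
  by_contra hns
  set f : ℕ → ℝ := fun q => if q.Prime ∧ ν q = 0 then 1/(q:ℝ) else 0 with hf
  have hf0 : ∀ n, 0 ≤ f n := by
    intro n; rw [hf]; dsimp only; split <;> positivity
  have hfns : ¬ Summable f := by
    intro hc
    apply hns
    have hind : {p : ℕ | p.Prime ∧ ν p = 0}.indicator (fun q => 1/(q:ℝ)) = f := by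
      funext q
      by_cases h : q.Prime ∧ ν q = 0 <;>
        simp [Set.indicator_apply, Set.mem_setOf_eq, h, hf]
    have hiff := summable_subtype_iff_indicator
      (s := {p : ℕ | p.Prime ∧ ν p = 0}) (f := fun q : ℕ => 1/(q:ℝ))
    exact hiff.mpr (by rw [hind]; exact hc)
  have htend := (not_summable_iff_tendsto_nat_atTop_of_nonneg hf0).mp hfns
  have hexp : Filter.Tendsto
      (fun n => Real.exp (-((1:ℝ)/2 * ∑ i ∈ Finset.range n, f i)))
      Filter.atTop (nhds 0) := by
    apply Real.tendsto_exp_atBot.comp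
    apply Filter.tendsto_neg_atTop_atBot.comp
    exact htend.const_mul_atTop (by norm_num : (0:ℝ) < 1/2)
  have hev : ∀ᶠ n in Filter.atTop,
      Real.exp (-((1:ℝ)/2 * ∑ i ∈ Finset.range n, f i)) < d :=
    hexp.eventually_lt_const hd0
  obtain ⟨n, hn⟩ := hev.exists
  set F := (Finset.range n).filter (fun q => q.Prime ∧ ν q = 0) with hF
  have hFprime : ∀ p ∈ F, Nat.Prime p := by
    intro p hp; rw [hF] at hp; simp only [Finset.mem_filter] at hp; exact hp.2.1
  have hFzero : ∀ p ∈ F, ν p = 0 := by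
    intro p hp; rw [hF] at hp; simp only [Finset.mem_filter] at hp; exact hp.2.2
  set Q : ℕ → ℕ → Prop := fun p a => ¬(p ∣ a ∧ ¬ p^2 ∣ a) with hQ
  set M := ∏ p ∈ F, p ^ 2 with hM
  have hMpos : 0 < M := Finset.prod_pos (fun p hp => pow_pos (hFprime p hp).pos 2)
  have hQmod : ∀ p ∈ F, ∀ a, Q p a ↔ Q p (a % p ^ 2) := by
    intro p hp a
    rw [hQ]
    have h1 : p ∣ p^2 := dvd_pow_self p (by norm_num)
    have h2 : p^2 ∣ p^2 := dvd_rfl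
    simp only
    rw [Nat.dvd_mod_iff h1, Nat.dvd_mod_iff h2]
  set P : ℕ → Prop := fun a => ∀ p ∈ F, Q p a with hP
  have hPmod : ∀ a, P a ↔ P (a % M) := by
    intro a
    rw [hP]
    apply forall₂_congr
    intro p hp
    rw [hQmod p hp a, hQmod p hp (a % M),
      Nat.mod_mod_of_dvd _ (Finset.dvd_prod_of_mem (fun p => p ^ 2) hp)]
  have hcard : ((Finset.range M).filter P).card
      = ∏ p ∈ F, ((Finset.range (p^2)).filter (Q p)).card :=
    crt_count_finset F hFprime 2 Q hQmod
  -- per-prime residue count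
  have hRp : ∀ p ∈ F, (((Finset.range (p^2)).filter (Q p)).card : ℝ)
      ≤ (p:ℝ)^2 * Real.exp (-((1:ℝ)/2 * f p)) := by
    intro p hp
    have hpp := hFprime p hp
    have hp1 : 1 < p := hpp.one_lt
    have hbadeq : ((Finset.range (p^2)).filter (fun a => p ∣ a ∧ ¬ p^2 ∣ a)).card
        = p^2/p - p^2/p^2 := by
      have h := count_exact_dvd (p^2) p 1 hp1 (by norm_num)
      simpa [pow_one] using h
    have hdiv1 : p^2/p = p := by
      rw [pow_two, Nat.mul_div_cancel_left p (by omega)]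
    have hdiv2 : p^2/p^2 = 1 := Nat.div_self (by positivity)
    have hQcard : ((Finset.range (p^2)).filter (Q p)).card = p^2 - (p - 1) := by
      show ((Finset.range (p^2)).filter (fun a => ¬(p ∣ a ∧ ¬ p^2 ∣ a))).card = p^2 - (p-1)
      rw [Finset.filter_not, Finset.card_sdiff_of_subset (Finset.filter_subset _ _), Finset.card_range,
        hbadeq, hdiv1, hdiv2]
    rw [hQcard]
    have hfp : f p = 1/(p:ℝ) := by
      rw [hf]; dsimp only; rw [if_pos ⟨hpp, hFzero p hp⟩]
    rw [hfp]
    have hpR : (2:ℝ) ≤ (p:ℝ) := by exact_mod_cast hp1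
    have hcast : ((p^2 - (p-1) : ℕ) : ℝ) = (p:ℝ)^2 - ((p:ℝ) - 1) := by
      have h1 : p - 1 ≤ p^2 := (Nat.sub_le p 1).trans (Nat.le_self_pow (by norm_num) p)
      rw [Nat.cast_sub h1, Nat.cast_pow, Nat.cast_sub (by omega)]
      norm_num
    rw [hcast]
    -- (p²-(p-1)) = p²(1 - (p-1)/p²) ≤ p² exp(-(p-1)/p²) ≤ p² exp(-1/(2p))
    have key1 : (p:ℝ)^2 - ((p:ℝ)-1) = (p:ℝ)^2 * (1 - ((p:ℝ)-1)/(p:ℝ)^2) := by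
      field_simp
    have key2 : 1 - ((p:ℝ)-1)/(p:ℝ)^2 ≤ Real.exp (-(((p:ℝ)-1)/(p:ℝ)^2)) :=
      one_sub_le_exp _
    have key3 : Real.exp (-(((p:ℝ)-1)/(p:ℝ)^2)) ≤ Real.exp (-((1:ℝ)/2 * (1/(p:ℝ)))) := by
      apply Real.exp_le_exp.mpr
      rw [neg_le_neg_iff, show (1:ℝ)/2*(1/(p:ℝ)) = 1/(2*(p:ℝ)) from by ring,
        div_le_div_iff₀ (by positivity) (by positivity)]
      nlinarith
    nlinarith [Real.exp_pos (-(((p:ℝ)-1)/(p:ℝ)^2)), sq_nonneg (p:ℝ)]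
  -- global residue bound
  have hglobal : (((Finset.range M).filter P).card : ℝ)
      ≤ (M:ℝ) * Real.exp (-((1:ℝ)/2 * ∑ i ∈ Finset.range n, f i)) := by
    rw [hcard]
    have hMeq : (M:ℝ) = ∏ p ∈ F, (p:ℝ)^2 := by
      rw [hM]; push_cast; rfl
    have hsum_eq : ∑ i ∈ Finset.range n, f i = ∑ p ∈ F, f p := by
      rw [hF, Finset.sum_filter]
      apply Finset.sum_congr rfl
      intro q _
      by_cases h : q.Prime ∧ ν q = 0
      · rw [if_pos h]
      · rw [if_neg h, hf]
        dsimp only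
        rw [if_neg h]
    rw [hsum_eq]
    have h1 : -((1:ℝ)/2 * ∑ p ∈ F, f p) = ∑ p ∈ F, -((1:ℝ)/2 * f p) := by
      rw [Finset.mul_sum, ← Finset.sum_neg_distrib]
    rw [h1, Real.exp_sum, hMeq, ← Finset.prod_mul_distrib, Nat.cast_prod]
    apply Finset.prod_le_prod
    · intro p hp
      exact Nat.cast_nonneg _
    · exact hRp
  set ρ : ℝ := (((Finset.range M).filter P).card : ℝ) / M with hρ
  have hρ0 : 0 ≤ ρ := div_nonneg (Nat.cast_nonneg _) (Nat.cast_nonneg _)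
  have hcnt : ∀ N : ℕ, (cnt {n : ℕ | ν n ≠ 0} N : ℝ) / N ≤ ρ + (M:ℝ)/N := by
    intro N
    rcases Nat.eq_zero_or_pos N with rfl | hN
    · simp only [Nat.cast_zero, div_zero]
      linarith [hρ0]
    · have hsub : cnt {n : ℕ | ν n ≠ 0} N ≤ ((Finset.Icc 1 N).filter P).card := by
        rw [cnt_eq]
        apply Finset.card_le_card
        intro a ha
        simp only [Finset.mem_filter, Finset.mem_Icc, Set.mem_setOf_eq] at ha ⊢
        refine ⟨ha.1, ?_⟩
        intro p hp
        show ¬(p ∣ a ∧ ¬ p^2 ∣ a)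
        rintro ⟨hdvd, hndvd⟩
        have h1 : a ≠ 0 := by omega
        have h2 : ν (p^1) ≠ 0 := nu_pow_ne ν hν h1 ha.2 (hFprime p hp)
          (by rw [pow_one]; exact hdvd) (by norm_num; exact hndvd)
        rw [pow_one] at h2
        exact h2 (hFzero p hp)
      have hupper := (periodic_count_bounds M hMpos P hPmod N).2
      have hN0 : (0:ℝ) < N := by exact_mod_cast hN
      have hM0 : (0:ℝ) < M := by exact_mod_cast hMpos
      have hsub' : (cnt {n : ℕ | ν n ≠ 0} N : ℝ) ≤ ((Finset.Icc 1 N).filter P).card := by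
        exact_mod_cast hsub
      have hfin : ((N:ℝ) * (((Finset.range M).filter P).card : ℝ)/M + M)/N = ρ + (M:ℝ)/N := by
        rw [hρ]
        generalize (((Finset.range M).filter P).card : ℝ) = r
        field_simp
      calc (cnt {n : ℕ | ν n ≠ 0} N : ℝ)/N
          ≤ (((Finset.Icc 1 N).filter P).card : ℝ)/N := by gcongr
        _ ≤ ((N:ℝ) * (((Finset.range M).filter P).card : ℝ)/M + M)/N := by gcongr
        _ = ρ + (M:ℝ)/N := hfin
  have htendRHS : Filter.Tendsto (fun N : ℕ => ρ + (M:ℝ)/N) Filter.atTop (nhds ρ) := by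
    have h1 := tendsto_const_div_atTop_nhds_zero_nat (M:ℝ)
    have h2 := (tendsto_const_nhds (x := ρ) (f := Filter.atTop (α := ℕ))).add h1
    simpa using h2
  have hdρ : d ≤ ρ := le_of_tendsto_of_tendsto' hdens htendRHS hcnt
  have hρle : ρ ≤ Real.exp (-((1:ℝ)/2 * ∑ i ∈ Finset.range n, f i)) := by
    rw [hρ, div_le_iff₀ (by exact_mod_cast hMpos : (0:ℝ) < M)]
    linarith [hglobal]
  linarith

lemma key_approx (hν : ν.IsMultiplicative)
    (hsum : Summable (fun p : {p : ℕ // p.Prime ∧ ν p = 0} => (1 : ℝ) / (p : ℕ)))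
    {ε : ℝ} (hε : 0 < ε) :
    ∃ ρ : ℝ, Real.exp (-(2 * ∑' q, W ν q)) ≤ ρ ∧ ∃ M : ℕ, 0 < M ∧
      ∀ N : ℕ, 0 < N →
        ρ - ε - ((M:ℝ)+1)/N ≤ (cnt {n : ℕ | ν n ≠ 0} N : ℝ)/N ∧
        (cnt {n : ℕ | ν n ≠ 0} N : ℝ)/N ≤ ρ + ((M:ℝ)+1)/N := by
  have hWsum : Summable (W ν) := W_summable ν hsum
  -- pick x with tail < ε/2
  have htail : Filter.Tendsto (fun x : ℕ => ∑' i, W ν (i + (x+1)))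
      Filter.atTop (nhds 0) := by
    have h1 := tendsto_sum_nat_add (W ν)
    exact h1.comp (Filter.tendsto_add_atTop_nat 1)
  obtain ⟨x, hx⟩ := (htail.eventually_lt_const (by linarith : (0:ℝ) < ε/2)).exists
  -- pick K ≥ 1 with (x+1) * (1/2)^(K+1) < ε/2
  have hKlim : Filter.Tendsto (fun K : ℕ => ((x:ℝ)+1) * ((1:ℝ)/2)^(K+1))
      Filter.atTop (nhds 0) := by
    have h1 : Filter.Tendsto (fun K : ℕ => ((1:ℝ)/2)^K) Filter.atTop (nhds 0) :=
      tendsto_pow_atTop_nhds_zero_of_lt_one (by norm_num) (by norm_num)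
    have h2 := (h1.comp (Filter.tendsto_add_atTop_nat 1)).const_mul ((x:ℝ)+1)
    simpa using h2
  obtain ⟨K, hK1, hK⟩ := ((Filter.eventually_ge_atTop 1).and
    (hKlim.eventually_lt_const (by linarith : (0:ℝ) < ε/2))).exists
  set Px := (Finset.range (x+1)).filter Nat.Prime with hPx
  have hPxprime : ∀ p ∈ Px, Nat.Prime p := by
    intro p hp; rw [hPx] at hp; simp only [Finset.mem_filter] at hp; exact hp.2
  have hPxle : ∀ p ∈ Px, p ≤ x := by
    intro p hp; rw [hPx] at hp; simp only [Finset.mem_filter, Finset.mem_range] at hp; omega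
  have hPxmem : ∀ p : ℕ, p.Prime → p ≤ x → p ∈ Px := by
    intro p hp hle
    rw [hPx]; simp only [Finset.mem_filter, Finset.mem_range]; exact ⟨by omega, hp⟩
  set M := ∏ p ∈ Px, p ^ (K+1) with hM
  have hMpos : 0 < M := Finset.prod_pos (fun p hp => pow_pos (hPxprime p hp).pos _)
  set P : ℕ → Prop := fun a => ∀ p ∈ Px, GoodP ν p K a with hP
  have hGmod : ∀ p ∈ Px, ∀ a, GoodP ν p K a ↔ GoodP ν p K (a % p^(K+1)) :=
    fun p hp a => goodP_mod ν p K (hPxprime p hp).pos a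
  have hPmod : ∀ a, P a ↔ P (a % M) := by
    intro a
    rw [hP]
    apply forall₂_congr
    intro p hp
    rw [hGmod p hp a, hGmod p hp (a % M),
      Nat.mod_mod_of_dvd _ (Finset.dvd_prod_of_mem (fun p => p ^ (K+1)) hp)]
  have hcard : ((Finset.range M).filter P).card
      = ∏ p ∈ Px, ((Finset.range (p^(K+1))).filter (GoodP ν p K)).card :=
    crt_count_finset Px hPxprime (K+1) (fun p => GoodP ν p K) hGmod
  set ρ : ℝ := (((Finset.range M).filter P).card : ℝ) / M with hρ
  refine ⟨ρ, ?_, M, hMpos, ?_⟩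
  · -- lower bound on ρ
    have hMcast : (M:ℝ) = ∏ p ∈ Px, (p:ℝ)^(K+1) := by rw [hM]; push_cast; rfl
    have hρeq : ρ = ∏ p ∈ Px, ((((Finset.range (p^(K+1))).filter (GoodP ν p K)).card : ℝ)
        / (p:ℝ)^(K+1)) := by
      rw [hρ, hcard, hMcast, Finset.prod_div_distrib, Nat.cast_prod]
    have hfac : ∀ p ∈ Px, Real.exp (-(2 * W ν p))
        ≤ (((Finset.range (p^(K+1))).filter (GoodP ν p K)).card : ℝ) / (p:ℝ)^(K+1) := by
      intro p hp
      have hpp := hPxprime p hp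
      have hplb := good_count_lb ν p K hpp hK1
      have hpow : (0:ℝ) < (p:ℝ)^(K+1) := by
        have : (0:ℝ) < (p:ℝ) := by exact_mod_cast hpp.pos
        positivity
      have h1 : Real.exp (-(2 * W ν p)) ≤ 1 - W ν p :=
        one_sub_ge_exp (W_nonneg ν p) (W_le_half ν p hpp)
      rw [le_div_iff₀ hpow]
      calc Real.exp (-(2 * W ν p)) * (p:ℝ)^(K+1)
          ≤ (1 - W ν p) * (p:ℝ)^(K+1) := by
            apply mul_le_mul_of_nonneg_right h1 (le_of_lt hpow)
        _ ≤ _ := by rw [mul_comm]; exact hplb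
    have hexpsum : Real.exp (-(2 * ∑ p ∈ Px, W ν p))
        = ∏ p ∈ Px, Real.exp (-(2 * W ν p)) := by
      rw [← Real.exp_sum]
      congr 1
      rw [Finset.mul_sum, ← Finset.sum_neg_distrib]
    have hsum_le : ∑ p ∈ Px, W ν p ≤ ∑' q, W ν q :=
      Summable.sum_le_tsum Px (fun q _ => W_nonneg ν q) hWsum
    calc Real.exp (-(2 * ∑' q, W ν q)) ≤ Real.exp (-(2 * ∑ p ∈ Px, W ν p)) := by
          apply Real.exp_le_exp.mpr; linarith
      _ = ∏ p ∈ Px, Real.exp (-(2 * W ν p)) := hexpsum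
      _ ≤ ∏ p ∈ Px, ((((Finset.range (p^(K+1))).filter (GoodP ν p K)).card : ℝ)
            / (p:ℝ)^(K+1)) :=
          Finset.prod_le_prod (fun p _ => le_of_lt (Real.exp_pos _)) hfac
      _ = ρ := hρeq.symm
  · -- the counting estimates
    intro N hN
    have hN0 : (0:ℝ) < N := by exact_mod_cast hN
    have hM0 : (0:ℝ) < M := by exact_mod_cast hMpos
    have hbounds := periodic_count_bounds M hMpos P hPmod N
    -- cnt S N ≤ C_P N
    have hsub : cnt {n : ℕ | ν n ≠ 0} N ≤ ((Finset.Icc 1 N).filter P).card := by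
      rw [cnt_eq]
      apply Finset.card_le_card
      intro a ha
      simp only [Finset.mem_filter, Finset.mem_Icc, Set.mem_setOf_eq] at ha ⊢
      refine ⟨ha.1, ?_⟩
      intro p hp
      intro k hk1 hkK hdvd hndvd
      exact nu_pow_ne ν hν (by omega : a ≠ 0) ha.2 (hPxprime p hp) hdvd hndvd
    -- C_P N ≤ cnt S N + card B, with B the sieved numbers with ν = 0
    set B := (Finset.Icc 1 N).filter (fun a => P a ∧ ν a = 0) with hB
    have hCle : ((Finset.Icc 1 N).filter P).card ≤ cnt {n : ℕ | ν n ≠ 0} N + B.card := by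
      rw [cnt_eq]
      have h1 : ((Finset.Icc 1 N).filter P).card
          ≤ (((Finset.Icc 1 N).filter P) \ B).card + B.card :=
        Finset.card_le_card_sdiff_add_card
      refine le_trans h1 (Nat.add_le_add_right ?_ _)
      apply Finset.card_le_card
      intro a ha
      rw [Finset.mem_sdiff] at ha
      obtain ⟨haP, haB⟩ := ha
      simp only [Finset.mem_filter, Finset.mem_Icc] at haP ⊢
      refine ⟨haP.1, ?_⟩
      simp only [Set.mem_setOf_eq]
      intro h0
      apply haB
      rw [hB]
      simp only [Finset.mem_filter, Finset.mem_Icc]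
      exact ⟨haP.1, haP.2, h0⟩
    -- bound the bad set B
    set cov : ℕ → ℕ := fun p => if p ≤ x then p^(K+1) else (if ν p = 0 then p else p^2)
      with hcov
    set PN := (Finset.Icc 1 N).filter Nat.Prime with hPN
    have hBsub : B ⊆ PN.biUnion (fun p => (Finset.Icc 1 N).filter (fun a => cov p ∣ a)) := by
      intro a ha
      rw [hB] at ha
      simp only [Finset.mem_filter, Finset.mem_Icc] at ha
      obtain ⟨⟨ha1, haN⟩, hPa, hz⟩ := ha
      obtain ⟨p, hpmem, hpz⟩ := nu_zero_exists ν hν (by omega : a ≠ 0) hz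
      have hpp : p.Prime := Nat.prime_of_mem_primeFactors hpmem
      have hpdvd : p ∣ a := Nat.dvd_of_mem_primeFactors hpmem
      have hpN : p ≤ N := le_trans (Nat.le_of_dvd (by omega) hpdvd) haN
      have hv1 : 1 ≤ a.factorization p :=
        Nat.Prime.factorization_pos_of_dvd hpp (by omega : a ≠ 0) hpdvd
      rw [Finset.mem_biUnion]
      refine ⟨p, ?_, ?_⟩
      · rw [hPN]
        simp only [Finset.mem_filter, Finset.mem_Icc]
        exact ⟨⟨hpp.one_lt.le, hpN⟩, hpp⟩
      simp only [Finset.mem_filter, Finset.mem_Icc]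
      refine ⟨⟨ha1, haN⟩, ?_⟩
      rw [hcov]
      simp only
      by_cases hpx : p ≤ x
      · rw [if_pos hpx]
        have hgood := hPa p (hPxmem p hpp hpx)
        by_cases hvK : a.factorization p ≤ K
        · exact absurd (hgood (a.factorization p) hv1 hvK (Nat.ordProj_dvd a p)
            (Nat.pow_succ_factorization_not_dvd (by omega : a ≠ 0) hpp)) (by simpa using hpz)
        · exact (hpp.pow_dvd_iff_le_factorization (by omega : a ≠ 0)).mpr (by omega)
      · rw [if_neg hpx]
        by_cases hzp : ν p = 0
        · rw [if_pos hzp]; exact hpdvd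
        · rw [if_neg hzp]
          have hv2 : 2 ≤ a.factorization p := by
            rcases Nat.lt_or_ge (a.factorization p) 2 with h | h
            · exfalso
              have hveq : a.factorization p = 1 := by omega
              rw [hveq, pow_one] at hpz
              exact hzp hpz
            · exact h
          exact (hpp.pow_dvd_iff_le_factorization (by omega : a ≠ 0)).mpr hv2
    have hcount : (B.card : ℝ) ≤ ∑ p ∈ PN, ((N / cov p : ℕ) : ℝ) := by
      have h1 : B.card ≤ ∑ p ∈ PN, ((Finset.Icc 1 N).filter (fun a => cov p ∣ a)).card :=
        le_trans (Finset.card_le_card hBsub) Finset.card_biUnion_le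
      have h2 : ∀ p ∈ PN, ((Finset.Icc 1 N).filter (fun a => cov p ∣ a)).card = N / cov p :=
        fun p _ => count_dvd_Icc N (cov p)
      rw [Finset.sum_congr rfl h2] at h1
      exact_mod_cast h1
    rw [← Finset.sum_filter_add_sum_filter_not PN (fun p => p ≤ x)] at hcount
    have hpart1 : ∑ p ∈ PN.filter (fun p => p ≤ x), ((N / cov p : ℕ) : ℝ)
        ≤ ((x:ℝ)+1) * ((N:ℝ) * ((1:ℝ)/2)^(K+1)) := by
      have hterm : ∀ p ∈ PN.filter (fun p => p ≤ x),
          ((N / cov p : ℕ) : ℝ) ≤ (N:ℝ) * ((1:ℝ)/2)^(K+1) := by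
        intro p hp
        simp only [Finset.mem_filter] at hp
        obtain ⟨hpPN, hpx⟩ := hp
        rw [hPN] at hpPN
        simp only [Finset.mem_filter, Finset.mem_Icc] at hpPN
        have hpp := hpPN.2
        have hcovp : cov p = p^(K+1) := by rw [hcov]; simp only; rw [if_pos hpx]
        have h2p : (2:ℝ)^(K+1) ≤ ((cov p : ℕ) : ℝ) := by
          rw [hcovp]
          push_cast
          apply pow_le_pow_left₀ (by norm_num)
          exact_mod_cast hpp.two_le
        calc ((N / cov p : ℕ) : ℝ) ≤ (N:ℝ) / (cov p : ℝ) := Nat.cast_div_le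
          _ ≤ (N:ℝ) / (2:ℝ)^(K+1) := by
              apply div_le_div_of_nonneg_left (by positivity) (by positivity) h2p
          _ = (N:ℝ) * ((1:ℝ)/2)^(K+1) := by
              rw [div_pow, one_pow, mul_one_div]
      calc ∑ p ∈ PN.filter (fun p => p ≤ x), ((N / cov p : ℕ) : ℝ)
          ≤ (PN.filter (fun p => p ≤ x)).card • ((N:ℝ) * ((1:ℝ)/2)^(K+1)) :=
            Finset.sum_le_card_nsmul _ _ _ hterm
        _ ≤ ((x:ℝ)+1) * ((N:ℝ) * ((1:ℝ)/2)^(K+1)) := by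
            rw [nsmul_eq_mul]
            apply mul_le_mul_of_nonneg_right _ (by positivity)
            have hsubx : PN.filter (fun p => p ≤ x) ⊆ Finset.Icc 1 x := by
              intro p hp
              simp only [Finset.mem_filter, hPN, Finset.mem_Icc] at hp
              simp only [Finset.mem_Icc]
              exact ⟨hp.1.1.1, hp.2⟩
            have := Finset.card_le_card hsubx
            rw [Nat.card_Icc] at this
            have hcast : ((PN.filter (fun p => p ≤ x)).card : ℝ) ≤ (x:ℝ) := by
              exact_mod_cast le_trans this (by omega)
            linarith
    have hpart2 : ∑ p ∈ PN.filter (fun p => ¬ p ≤ x), ((N / cov p : ℕ) : ℝ)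
        ≤ (N:ℝ) * (∑' i, W ν (i + (x+1))) := by
      have hterm : ∀ p ∈ PN.filter (fun p => ¬ p ≤ x),
          ((N / cov p : ℕ) : ℝ) ≤ (N:ℝ) * W ν p := by
        intro p hp
        simp only [Finset.mem_filter] at hp
        obtain ⟨hpPN, hpx⟩ := hp
        rw [hPN] at hpPN
        simp only [Finset.mem_filter, Finset.mem_Icc] at hpPN
        have hpp := hpPN.2
        have hp0 : (0:ℝ) < (p:ℝ) := by exact_mod_cast hpp.pos
        by_cases hzp : ν p = 0
        · have hcovp : cov p = p := by rw [hcov]; simp only; rw [if_neg hpx, if_pos hzp]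
          have hW : W ν p = 1/(p:ℝ) := by unfold W; rw [if_pos hpp, if_pos hzp]
          calc ((N / cov p : ℕ) : ℝ) ≤ (N:ℝ) / (cov p : ℝ) := Nat.cast_div_le
            _ = (N:ℝ) * W ν p := by rw [hcovp, hW]; ring
        · have hcovp : cov p = p^2 := by rw [hcov]; simp only; rw [if_neg hpx, if_neg hzp]
          have hW : W ν p = 1/(p:ℝ)^2 := by unfold W; rw [if_pos hpp, if_neg hzp]
          calc ((N / cov p : ℕ) : ℝ) ≤ (N:ℝ) / (cov p : ℝ) := Nat.cast_div_le
            _ = (N:ℝ) * W ν p := by rw [hcovp, hW]; push_cast; ring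
      calc ∑ p ∈ PN.filter (fun p => ¬ p ≤ x), ((N / cov p : ℕ) : ℝ)
          ≤ ∑ p ∈ PN.filter (fun p => ¬ p ≤ x), (N:ℝ) * W ν p :=
            Finset.sum_le_sum hterm
        _ = (N:ℝ) * ∑ p ∈ PN.filter (fun p => ¬ p ≤ x), W ν p := by
            rw [Finset.mul_sum]
        _ ≤ (N:ℝ) * (∑' i, W ν (i + (x+1))) := by
            apply mul_le_mul_of_nonneg_left _ (by positivity)
            apply sum_tail_le (W ν) (W_nonneg ν) hWsum
            intro q hq
            simp only [Finset.mem_filter] at hq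
            omega
    have hBcard : (B.card : ℝ) ≤ (N:ℝ) * ε := by
      have h1 : ((x:ℝ)+1) * ((N:ℝ) * ((1:ℝ)/2)^(K+1)) ≤ (N:ℝ) * (ε/2) := by
        have : ((x:ℝ)+1) * ((N:ℝ) * ((1:ℝ)/2)^(K+1))
            = (N:ℝ) * (((x:ℝ)+1) * ((1:ℝ)/2)^(K+1)) := by ring
        rw [this]
        apply mul_le_mul_of_nonneg_left (le_of_lt hK) (by positivity)
      have h2 : (N:ℝ) * (∑' i, W ν (i + (x+1))) ≤ (N:ℝ) * (ε/2) :=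
        mul_le_mul_of_nonneg_left (le_of_lt hx) (by positivity)
      calc (B.card : ℝ) ≤ _ := hcount
        _ ≤ (N:ℝ) * (ε/2) + (N:ℝ) * (ε/2) := by linarith [hpart1, hpart2]
        _ = (N:ℝ) * ε := by ring
    -- final estimates
    have hNρ : (N:ℝ) * (((Finset.range M).filter P).card : ℝ) / M = (N:ℝ) * ρ := by
      rw [hρ, mul_div_assoc]
    have hlo := hbounds.1
    have hup := hbounds.2
    rw [hNρ] at hlo hup
    have hsub' : (cnt {n : ℕ | ν n ≠ 0} N : ℝ) ≤ ((Finset.Icc 1 N).filter P).card := by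
      exact_mod_cast hsub
    have hCle' : (((Finset.Icc 1 N).filter P).card : ℝ)
        ≤ (cnt {n : ℕ | ν n ≠ 0} N : ℝ) + (B.card : ℝ) := by
      exact_mod_cast hCle
    constructor
    · have hmain : (ρ - ε) * N - ((M:ℝ)+1) ≤ (cnt {n : ℕ | ν n ≠ 0} N : ℝ) := by
        nlinarith
      have heq : ρ - ε - ((M:ℝ)+1)/N = ((ρ - ε) * N - ((M:ℝ)+1))/N := by
        field_simp
      rw [heq]
      gcongr
    · have hmain : (cnt {n : ℕ | ν n ≠ 0} N : ℝ) ≤ ρ * N + ((M:ℝ)+1) := by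
        nlinarith
      have heq : ρ + ((M:ℝ)+1)/N = (ρ * N + ((M:ℝ)+1))/N := by
        field_simp
      rw [heq]
      gcongr

lemma backward (hν : ν.IsMultiplicative)
    (hsum : Summable (fun p : {p : ℕ // p.Prime ∧ ν p = 0} => (1 : ℝ) / (p : ℕ))) :
    ∃ d : ℝ, 0 < d ∧ HasDensity {n : ℕ | ν n ≠ 0} d := by
  have hc₀pos : (0:ℝ) < Real.exp (-(2 * ∑' q, W ν q)) := Real.exp_pos _
  set c₀ : ℝ := Real.exp (-(2 * ∑' q, W ν q)) with hc₀
  have hMdiv : ∀ (M : ℕ) (a : ℝ), 0 < a → ∀ᶠ N : ℕ in Filter.atTop, ((M:ℝ)+1)/N < a := by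
    intro M a ha
    exact (tendsto_const_div_atTop_nhds_zero_nat ((M:ℝ)+1)).eventually_lt_const ha
  have hcau : CauchySeq (fun N : ℕ => (cnt {n : ℕ | ν n ≠ 0} N : ℝ) / N) := by
    rw [Metric.cauchySeq_iff]
    intro ε hε
    obtain ⟨ρ, hρc, M, hMpos, hbound⟩ := key_approx ν hν hsum (by linarith : (0:ℝ) < ε/8)
    obtain ⟨N₀, hN₀⟩ := Filter.eventually_atTop.mp
      ((hMdiv M (ε/8) (by linarith)).and (Filter.eventually_ge_atTop 1))
    refine ⟨N₀, ?_⟩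
    intro m hm n hn
    obtain ⟨hm1, hm2⟩ := hN₀ m hm
    obtain ⟨hn1, hn2⟩ := hN₀ n hn
    have hbm := hbound m hm2
    have hbn := hbound n hn2
    show dist ((cnt {n : ℕ | ν n ≠ 0} m : ℝ) / m) ((cnt {n : ℕ | ν n ≠ 0} n : ℝ) / n) < ε
    rw [Real.dist_eq, abs_sub_lt_iff]
    constructor <;> linarith [hbm.1, hbm.2, hbn.1, hbn.2]
  obtain ⟨d, hd⟩ := cauchySeq_tendsto_of_complete hcau
  have hpos : 0 < d := by
    obtain ⟨ρ, hρc, M, hMpos, hbound⟩ := key_approx ν hν hsum (by linarith : (0:ℝ) < c₀/4)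
    have hev : ∀ᶠ N : ℕ in Filter.atTop,
        c₀/2 ≤ (cnt {n : ℕ | ν n ≠ 0} N : ℝ) / N := by
      filter_upwards [hMdiv M (c₀/4) (by linarith), Filter.eventually_ge_atTop 1] with N h1 h2
      have hb := (hbound N h2).1
      linarith
    have := ge_of_tendsto hd hev
    linarith
  exact ⟨d, hpos, hd⟩

end SieveAux

theorem support_positive_density_iff
    (ν : ArithmeticFunction ℂ) (hν : ν.IsMultiplicative) :
    (∃ d : ℝ, 0 < d ∧ HasDensity {n : ℕ | ν n ≠ 0} d) ↔
      Summable (fun p : {p : ℕ // p.Prime ∧ ν p = 0} => (1 : ℝ) / (p : ℕ)) := by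
  constructor
  · rintro ⟨d, hd0, hdens⟩
    exact SieveAux.forward ν hν d hd0 hdens
  · intro hsum
    exact SieveAux.backward ν hν hsum
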